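/- Let f be a real polynomial of degree n with only real roots, having k distinct roots λ_1,…,λ_k of multiplicities r_1,…,r_k, and let x_{n-1}, x_{n-2} be the roots of f^{(n-1)} and f^{(n-2)} respectively. Then for each j and each m with 0 ≤ m ≤ r_j − 1: |λ_j − x_{n-1}| ≤ sqrt((n − r_j)(n − m − 1)/(r_j − m)) · |x_{n-1} − x_{n-2}|. -/

import Mathlib

open Polynomial Multiset

lemma aux_descL1 (k : ℕ) : (k+1).descFactorial k = (k+1).factorial := by
  induction k with
  | zero => rfl
  | succ j ih => rw [Nat.succ_descFactorial_succ, ih]; simp [Nat.factorial_succ]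

lemma aux_descL2 (k : ℕ) : (k+2).descFactorial k * 2 = (k+2).factorial := by
  induction k with
  | zero => rfl
  | succ j ih => rw [Nat.succ_descFactorial_succ, Nat.mul_assoc, ih]
                 simp [Nat.factorial_succ]

lemma aux_esymm_one (s : Multiset ℝ) : s.esymm 1 = s.sum := by
  simp [Multiset.esymm, Multiset.powersetCard_one, Multiset.map_map]

lemma aux_esymm_two (s : Multiset ℝ) :
    2 * s.esymm 2 = s.sum ^ 2 - (s.map (fun x => x ^ 2)).sum := by
  induction s using Multiset.induction with
  | empty => simp [Multiset.esymm, Multiset.powersetCard_zero_right 1]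
  | cons a s ih =>
    have h2 : (Multiset.map (fun x => a * x) s).sum = a * s.sum := by
      have := Multiset.sum_map_mul_left (s := s) (a := a) (f := id)
      simpa using this
    have h1 : (a ::ₘ s).esymm 2 = s.esymm 2 + a * s.sum := by
      rw [Multiset.esymm, show (2:ℕ) = 1 + 1 from rfl, Multiset.powersetCard_cons,
        Multiset.map_add, Multiset.sum_add]
      rw [Multiset.powersetCard_one, Multiset.map_map, Multiset.map_map]
      simp only [Function.comp_def, Multiset.prod_cons, Multiset.prod_singleton]
      rw [h2]; rfl
    rw [h1]
    simp only [Multiset.sum_cons, Multiset.map_cons, Multiset.sum_cons]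
    nlinarith [ih]

lemma aux_cs (s : Multiset ℝ) :
    s.sum ^ 2 ≤ (Multiset.card s : ℝ) * (s.map (fun x => x ^ 2)).sum := by
  induction s using Multiset.induction with
  | empty => simp
  | cons a s ih =>
    simp only [Multiset.sum_cons, Multiset.map_cons, Multiset.card_cons]
    push_cast
    have hQ : 0 ≤ (s.map (fun x => x ^ 2)).sum := by
      apply Multiset.sum_nonneg; intro x hx
      obtain ⟨y, _, rfl⟩ := Multiset.mem_map.mp hx
      positivity
    by_cases hs : s = 0
    · simp [hs]
    · have hc1 : (1:ℝ) ≤ (Multiset.card s : ℝ) := by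
        have := Multiset.card_pos.mpr hs
        exact_mod_cast this
      nlinarith [sq_nonneg ((Multiset.card s : ℝ) * a - s.sum), sq_nonneg (a - s.sum),
        mul_nonneg (by linarith : (0:ℝ) ≤ (Multiset.card s : ℝ)) hQ, ih]

set_option maxHeartbeats 1600000 in
theorem stmt_9 (n m rj : ℕ) (hn : 2 ≤ n) (f : ℝ[X]) (hdeg : f.natDegree = n)
    (hreal : f.roots.card = n) (lj : ℝ) (hroot : f.eval lj = 0)
    (hmult : f.rootMultiplicity lj = rj) (hm : m < rj)
    (xn1 : ℝ) (hxn1 : (derivative^[n - 1] f).eval xn1 = 0)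
    (xn2 : ℝ) (hxn2 : (derivative^[n - 2] f).eval xn2 = 0) :
    |lj - xn1| ≤
      Real.sqrt (((n : ℝ) - rj) * ((n : ℝ) - m - 1) / ((rj : ℝ) - m)) * |xn1 - xn2| := by
  obtain ⟨p, rfl⟩ : ∃ p, n = p + 2 := ⟨n - 2, by omega⟩
  set a := f.leadingCoeff with ha
  have hf0 : f ≠ 0 := fun h => by simp [h] at hdeg
  have ha0 : a ≠ 0 := leadingCoeff_ne_zero.mpr hf0
  set μ := f.roots with hμ
  set S := μ.sum with hS
  set Q := (μ.map (fun x => x ^ 2)).sum with hQdef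
  set e2 := μ.esymm 2 with he2def
  have hcard' : Multiset.card μ = f.natDegree := by rw [hreal, hdeg]
  have hcn : f.coeff (p + 2) = a := by rw [← hdeg]; rfl
  have hc1 : f.coeff (p + 1) = -(a * S) := by
    have h := coeff_eq_esymm_roots_of_card hcard' (k := p + 1) (by omega)
    rw [hdeg, show p + 2 - (p + 1) = 1 from by omega] at h
    rw [h, aux_esymm_one]; ring
  have hc2 : f.coeff p = a * e2 := by
    have h := coeff_eq_esymm_roots_of_card hcard' (k := p) (by omega)
    rw [hdeg, show p + 2 - p = 2 from by omega] at h
    rw [h]; ring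
  have hF0 : (0:ℝ) < (Nat.factorial p : ℝ) := by exact_mod_cast p.factorial_pos
  have hFa : ((Nat.factorial (p+1) : ℝ)) * a ≠ 0 := by
    apply mul_ne_zero _ ha0
    exact_mod_cast (Nat.factorial_pos (p+1)).ne'
  -- linear equation
  have hdeg1 : (derivative^[p + 1] f).natDegree < 2 := by
    have := natDegree_iterate_derivative f (p + 1)
    rw [hdeg] at this; omega
  have he1 : (derivative^[p+1] f).coeff 0 + (derivative^[p+1] f).coeff 1 * xn1 = 0 := by
    rw [show p + 2 - 1 = p + 1 from rfl] at hxn1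
    rw [eval_eq_sum_range' hdeg1 xn1] at hxn1
    simpa [Finset.sum_range_succ] using hxn1
  rw [coeff_iterate_derivative, coeff_iterate_derivative,
    show (0 : ℕ) + (p+1) = p + 1 from by omega, show (1 : ℕ) + (p+1) = p + 2 from by omega,
    hc1, hcn, Nat.descFactorial_self, aux_descL1 (p+1)] at he1
  simp only [nsmul_eq_mul] at he1
  push_cast [Nat.factorial_succ] at he1
  have hx1 : ((p:ℝ) + 2) * xn1 = S := by
    apply mul_left_cancel₀ hFa
    push_cast [Nat.factorial_succ]
    linear_combination he1
  -- quadratic equation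
  have hdeg2 : (derivative^[p] f).natDegree < 3 := by
    have := natDegree_iterate_derivative f p
    rw [hdeg] at this; omega
  have he2 : (derivative^[p] f).coeff 0 + xn2 * (derivative^[p] f).coeff 1 +
      xn2 * (xn2 * (derivative^[p] f).coeff 2) = 0 := by
    rw [show p + 2 - 2 = p from by omega] at hxn2
    rw [eval_eq_sum_range' hdeg2 xn2] at hxn2
    simpa [Finset.sum_range_succ, pow_succ, mul_assoc, mul_comm] using hxn2
  rw [coeff_iterate_derivative, coeff_iterate_derivative, coeff_iterate_derivative,
    show (0 : ℕ) + p = p from by omega, show (1 : ℕ) + p = p + 1 from by omega,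
    show (2 : ℕ) + p = p + 2 from by omega,
    hc1, hcn, hc2, Nat.descFactorial_self, aux_descL1 p] at he2
  simp only [nsmul_eq_mul] at he2
  have hd5 : ((p+2).descFactorial p : ℝ) * 2 = ((p:ℝ)+2)*((p:ℝ)+1)*(Nat.factorial p : ℝ) := by
    have := aux_descL2 p
    have h2 : ((p+2).descFactorial p : ℝ) * 2 = ((p+2).factorial : ℝ) := by exact_mod_cast this
    push_cast [Nat.factorial_succ] at h2
    linarith [h2]
  have hq : 2 * e2 - 2*((p:ℝ)+1)*S*xn2 + ((p:ℝ)+2)*((p:ℝ)+1)*xn2^2 = 0 := by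
    apply mul_left_cancel₀ (mul_ne_zero hF0.ne' ha0)
    push_cast [Nat.factorial_succ] at he2
    linear_combination 2 * he2 - a * xn2^2 * hd5
  -- main identity : N^2 (N-1) (xn1-xn2)^2 = N Q - S^2
  have he2id : 2 * e2 = S ^ 2 - Q := aux_esymm_two μ
  have hd : ((p:ℝ)+2)^2*((p:ℝ)+1)*(xn1-xn2)^2 = ((p:ℝ)+2)*Q - S^2 := by
    linear_combination (((p:ℝ)+1)*(((p:ℝ)+2)*xn1 + S - 2*((p:ℝ)+2)*xn2))*hx1
      + ((p:ℝ)+2)*hq - ((p:ℝ)+2)*he2id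
  -- split roots
  set t := μ.filter (fun x => ¬ x = lj) with ht
  set T := t.sum with hT
  set Q' := (t.map (fun x => x ^ 2)).sum with hQ'
  have hdecomp : μ.filter (fun x => x = lj) + t = μ := Multiset.filter_add_not _ μ
  have hrep : μ.filter (fun x => x = lj) = Multiset.replicate rj lj := by
    have := Multiset.filter_eq' μ lj
    rwa [Polynomial.count_roots, hmult] at this
  have hsum_split : S = (rj:ℝ) * lj + T := by
    rw [hS, ← hdecomp, Multiset.sum_add, hrep, Multiset.sum_replicate, nsmul_eq_mul]
  have hQ_split : Q = (rj:ℝ) * lj^2 + Q' := by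
    rw [hQdef, ← hdecomp, Multiset.map_add, Multiset.sum_add, hrep, Multiset.map_replicate,
      Multiset.sum_replicate, nsmul_eq_mul]
  have hcardt : rj + Multiset.card t = p + 2 := by
    have := congrArg Multiset.card hdecomp
    rw [Multiset.card_add, hrep, Multiset.card_replicate, hreal] at this
    omega
  have hQ'0 : 0 ≤ Q' := by
    apply Multiset.sum_nonneg; intro x hx
    obtain ⟨y, _, rfl⟩ := Multiset.mem_map.mp hx
    positivity
  have hCS : T ^ 2 ≤ (Multiset.card t : ℝ) * Q' := aux_cs t
  clear_value a μ S Q e2 t T Q'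
  push_cast
  by_cases hc0 : Multiset.card t = 0
  · -- all roots equal lj
    have ht0 : t = 0 := Multiset.card_eq_zero.mp hc0
    have hT0 : T = 0 := by rw [hT, ht0]; simp
    have hrj : (rj:ℝ) = (p:ℝ) + 2 := by
      have : rj = p + 2 := by omega
      exact_mod_cast this
    have hxlj : xn1 = lj := by
      apply mul_left_cancel₀ (show ((p:ℝ)+2) ≠ 0 by positivity)
      rw [hx1, hsum_split, hT0, hrj]; ring
    rw [hxlj, sub_self, abs_zero]
    positivity
  · -- nontrivial case
    have hct1 : 1 ≤ Multiset.card t := by omega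
    have hrjle : (rj:ℝ) ≤ (p:ℝ) + 1 := by
      have : rj ≤ p + 1 := by omega
      exact_mod_cast this
    have hmrj : (m:ℝ) + 1 ≤ (rj:ℝ) := by exact_mod_cast hm
    have hM0 : (0:ℝ) ≤ (m:ℝ) := Nat.cast_nonneg m
    have hRM : (0:ℝ) < (rj:ℝ) - m := by linarith
    have hCpos : (0:ℝ) < ((p:ℝ) + 2) - rj := by linarith
    have hcardC : (Multiset.card t : ℝ) = ((p:ℝ) + 2) - rj := by
      have : (rj:ℝ) + (Multiset.card t : ℝ) = (p:ℝ) + 2 := by exact_mod_cast hcardt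
      linarith
    have hNM1 : (0:ℝ) ≤ ((p:ℝ) + 2) - m - 1 := by linarith
    have hY : 0 ≤ (((p:ℝ) + 2) - rj) * Q' - T^2 := by
      rw [hcardC] at hCS; linarith
    have hA0 : (0:ℝ) ≤ ((((p:ℝ) + 2) - rj) * lj - T)^2 := sq_nonneg _
    have hlin : ((p:ℝ)+2) * (lj - xn1) = (((p:ℝ)+2) - rj) * lj - T := by
      linear_combination -hx1 - hsum_split
    have hLX : ((p:ℝ)+2)^2 * (lj - xn1)^2 = ((((p:ℝ)+2) - rj) * lj - T)^2 := by
      linear_combination (((p:ℝ)+2)*(lj - xn1) + ((((p:ℝ)+2) - rj) * lj - T)) * hlin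
    have hid : (((p:ℝ)+2) - rj) * (((p:ℝ)+2) * Q - S^2)
        = (rj:ℝ) * ((((p:ℝ)+2) - rj) * lj - T)^2
          + ((p:ℝ)+2) * ((((p:ℝ)+2) - rj) * Q' - T^2) := by
      rw [hsum_split, hQ_split]; ring
    have hK0 : (lj - xn1)^2
        ≤ (((p:ℝ)+2 - rj) * ((p:ℝ)+2 - m - 1) / ((rj:ℝ) - m)) * (xn1 - xn2)^2 := by
      rw [div_mul_eq_mul_div, le_div_iff₀ hRM]
      have hpos : (0:ℝ) < ((p:ℝ)+2)^2 * ((p:ℝ)+1) * (((p:ℝ)+2) - rj) := by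
        apply mul_pos (by positivity) hCpos
      apply le_of_mul_le_mul_right _ hpos
      have e1 : (lj - xn1)^2 * ((rj:ℝ) - m) * (((p:ℝ)+2)^2 * ((p:ℝ)+1) * (((p:ℝ)+2) - rj))
          = ((rj:ℝ) - m) * ((p:ℝ)+1) * (((p:ℝ)+2) - rj) * ((((p:ℝ)+2) - rj) * lj - T)^2 := by
        linear_combination (((rj:ℝ) - m) * ((p:ℝ)+1) * (((p:ℝ)+2) - rj)) * hLX
      have e2' : ((p:ℝ)+2 - rj) * ((p:ℝ)+2 - m - 1) * (xn1 - xn2)^2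
            * (((p:ℝ)+2)^2 * ((p:ℝ)+1) * (((p:ℝ)+2) - rj))
          = (((p:ℝ)+2) - m - 1) * (((p:ℝ)+2) - rj)
            * ((rj:ℝ) * ((((p:ℝ)+2) - rj) * lj - T)^2
              + ((p:ℝ)+2) * ((((p:ℝ)+2) - rj) * Q' - T^2)) := by
        linear_combination ((((p:ℝ)+2) - m - 1) * (((p:ℝ)+2) - rj)^2) * hd
          + ((((p:ℝ)+2) - m - 1) * (((p:ℝ)+2) - rj)) * hid
      have h6 : (0:ℝ) ≤ (rj:ℝ) * (((p:ℝ)+2) - m - 1) - ((rj:ℝ) - m) * ((p:ℝ)+1) := by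
        linarith [mul_nonneg hM0 (by linarith : (0:ℝ) ≤ ((p:ℝ)+1) - rj)]
      have hint1 : (0:ℝ) ≤ ((rj:ℝ) * (((p:ℝ)+2) - m - 1) - ((rj:ℝ) - m) * ((p:ℝ)+1))
          * (((((p:ℝ)+2) - rj) * lj - T)^2 * (((p:ℝ)+2) - rj)) :=
        mul_nonneg h6 (mul_nonneg hA0 (by linarith))
      have hint2 : (0:ℝ) ≤ ((p:ℝ)+2) * (((((p:ℝ)+2) - m - 1) * (((p:ℝ)+2) - rj))
          * ((((p:ℝ)+2) - rj) * Q' - T^2)) := by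
        apply mul_nonneg (by positivity)
        exact mul_nonneg (mul_nonneg hNM1 (by linarith)) hY
      linarith [e1, e2', hint1, hint2]
    have hKnn : 0 ≤ ((p:ℝ)+2 - rj) * ((p:ℝ)+2 - m - 1) / ((rj:ℝ) - m) :=
      div_nonneg (mul_nonneg (by linarith) hNM1) (by linarith)
    calc |lj - xn1| = Real.sqrt ((lj - xn1)^2) := (Real.sqrt_sq_eq_abs _).symm
      _ ≤ Real.sqrt ((((p:ℝ)+2 - rj) * ((p:ℝ)+2 - m - 1) / ((rj:ℝ) - m)) * (xn1 - xn2)^2) :=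
          Real.sqrt_le_sqrt hK0
      _ = Real.sqrt (((p:ℝ)+2 - rj) * ((p:ℝ)+2 - m - 1) / ((rj:ℝ) - m))
            * Real.sqrt ((xn1 - xn2)^2) := Real.sqrt_mul hKnn _
      _ = Real.sqrt (((p:ℝ)+2 - rj) * ((p:ℝ)+2 - m - 1) / ((rj:ℝ) - m)) * |xn1 - xn2| := by
          rw [Real.sqrt_sq_eq_abs]
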